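/- Let f₁, …, fₙ : ℝ^d → ℝ be differentiable functions, each of which is real-analytic along every line in ℝ^d, and let γ > 0 satisfy |d²/dα² fⱼ(x + α p)| ≤ γ for all x ∈ ℝ^d, all unit vectors p ∈ ℝ^d, all α ∈ ℝ, and all j = 1, …, n. Let f : ℝ^d → ℝ be a continuous function such that f(x) ∈ {f₁(x), …, fₙ(x)} for every x ∈ ℝ^d. Then for every xₖ ∈ ℝ^d and every x ∈ ℝ^d: f(x) ≥ qₖ(x) := f(xₖ) + min_{j=1,…,n} ( ∇fⱼ(xₖ)ᵀ (x − xₖ) ) − (γ/2) ‖x − xₖ‖², where ∇fⱼ denotes the gradient and ‖·‖ the Euclidean norm. -/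

import Mathlib

open Filter Set Topology

/-- One-dimensional core lemma: a continuous selection `g` of finitely many
functions `gs j` (differentiable, with derivative `γ`-Lipschitz) lies above the
quadratic model `g 0 + (⨅ j, (gs j)' 0) * T - γ/2 * T²` for `T ≥ 0`. -/
private lemma oneD_quadratic_model {n : ℕ} (hn : Nonempty (Fin n)) (gs : Fin n → ℝ → ℝ)
    (han : ∀ j t, AnalyticAt ℝ (gs j) t)
    {γ : ℝ} (hγ : 0 < γ)
    (hb : ∀ j t, |deriv (deriv (gs j)) t| ≤ γ)
    {g : ℝ → ℝ} (hg : Continuous g)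
    (hsel : ∀ t, ∃ j, g t = gs j t)
    {T : ℝ} (hT : 0 ≤ T) :
    g 0 + (⨅ j, deriv (gs j) 0) * T - γ / 2 * T ^ 2 ≤ g T := by
  have hgs_diff : ∀ j, Differentiable ℝ (gs j) := fun j t => (han j t).differentiableAt
  have hderiv_an : ∀ j, AnalyticOnNhd ℝ (deriv (gs j)) univ := by
    intro j
    have h : AnalyticOnNhd ℝ (gs j) univ := fun t _ => han j t
    exact h.deriv
  have hderiv_diff : ∀ j, Differentiable ℝ (deriv (gs j)) :=
    fun j t => ((hderiv_an j) t (mem_univ t)).differentiableAt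
  have hlip : ∀ j (t : ℝ), 0 ≤ t → deriv (gs j) 0 - γ * t ≤ deriv (gs j) t := by
    intro j t ht
    have h1 := Convex.norm_image_sub_le_of_norm_deriv_le (f := deriv (gs j)) (s := univ)
      (fun x _ => hderiv_diff j x) (fun x _ => by simpa [Real.norm_eq_abs] using hb j x)
      convex_univ (mem_univ 0) (mem_univ t)
    rw [Real.norm_eq_abs, Real.norm_eq_abs, sub_zero, abs_of_nonneg ht] at h1
    have h2 := (abs_le.1 h1).1
    linarith
  set m := ⨅ j, deriv (gs j) 0 with hm_def
  have hm : ∀ j, m ≤ deriv (gs j) 0 :=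
    fun j => ciInf_le (Set.Finite.bddBelow (finite_range _)) j
  -- at every point, `g` agrees with some piece and frequently-to-the-right with the same piece
  have C : ∀ x : ℝ, ∃ j, g x = gs j x ∧ ∃ᶠ z in 𝓝[>] x, g z = gs j z := by
    intro x
    have hfreq : ∃ j, ∃ᶠ z in 𝓝[>] x, g z = gs j z := by
      by_contra h
      push_neg at h
      have h' : ∀ j, ∀ᶠ z in 𝓝[>] x, g z ≠ gs j z := by
        intro j
        simpa [Filter.not_frequently] using h j
      have hall : ∀ᶠ z in 𝓝[>] x, ∀ j, g z ≠ gs j z := eventually_all.2 h'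
      obtain ⟨z, hz⟩ := hall.exists
      obtain ⟨j, hj⟩ := hsel z
      exact hz j hj
    obtain ⟨j, hj⟩ := hfreq
    refine ⟨j, ?_, hj⟩
    have hcl : IsClosed {z | g z = gs j z} := isClosed_eq hg (hgs_diff j).continuous
    have hx : x ∈ closure {z | g z = gs j z} :=
      mem_closure_iff_frequently.2 (hj.filter_mono nhdsWithin_le_nhds)
    rwa [hcl.closure_eq] at hx
  choose J hJ1 hJ2 using C
  have key : ∀ ε : ℝ, 0 < ε → g 0 + m * T - γ / 2 * T ^ 2 - ε * (1 + T) ≤ g T := by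
    intro ε hε
    have hcont : ContinuousOn (fun t => -g t) (Icc (0:ℝ) T) := (hg.neg).continuousOn
    have hf' : ∀ x ∈ Ico (0:ℝ) T, ∀ r, (fun t => -deriv (gs (J t)) t) x < r →
        ∃ᶠ z in 𝓝[>] x, slope (fun t => -g t) x z < r := by
      intro x _ r hr
      simp only at hr
      have hD : HasDerivAt (gs (J x)) (deriv (gs (J x)) x) x :=
        ((hgs_diff (J x)) x).hasDerivAt
      have hle : 𝓝[>] x ≤ 𝓝[≠] x := by
        apply nhdsWithin_mono
        intro z hz
        simp only [mem_compl_iff, mem_singleton_iff]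
        exact ne_of_gt hz
      have hslope : Tendsto (slope (gs (J x)) x) (𝓝[>] x) (𝓝 (deriv (gs (J x)) x)) :=
        (hasDerivAt_iff_tendsto_slope.1 hD).mono_left hle
      have hev : ∀ᶠ z in 𝓝[>] x, -r < slope (gs (J x)) x z :=
        hslope (Ioi_mem_nhds (by linarith))
      refine ((hJ2 x).and_eventually hev).mono ?_
      rintro z ⟨hz1, hz2⟩
      have e1 : slope g x z = slope (gs (J x)) x z := by
        rw [slope_def_field, slope_def_field, hz1, hJ1 x]
      have e2 : slope (fun t => -g t) x z = -slope g x z := by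
        rw [slope_def_field, slope_def_field]; ring
      rw [e2, e1]; linarith
    have ha : (fun t => -g t) 0 ≤ (fun t : ℝ => -(g 0 + m * t - γ / 2 * t ^ 2 - ε * (1 + t))) 0 := by
      simp only
      nlinarith [hε]
    have hB : ∀ t : ℝ, HasDerivAt (fun t : ℝ => -(g 0 + m * t - γ / 2 * t ^ 2 - ε * (1 + t)))
        ((fun t : ℝ => -(m - γ * t - ε)) t) t := by
      intro t
      have h1 : HasDerivAt (fun t : ℝ => g 0 + m * t - γ / 2 * t ^ 2 - ε * (1 + t))
          (m - γ * t - ε) t := by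
        have := (((hasDerivAt_const t (g 0)).add ((hasDerivAt_id t).const_mul m)).sub
          ((hasDerivAt_pow 2 t).const_mul (γ / 2))).sub
          (((hasDerivAt_const t (1:ℝ)).add (hasDerivAt_id t)).const_mul ε)
        exact this.congr_deriv (by ring)
      exact h1.neg
    have hbd : ∀ x ∈ Ico (0:ℝ) T,
        (fun t => -g t) x = (fun t : ℝ => -(g 0 + m * t - γ / 2 * t ^ 2 - ε * (1 + t))) x →
        (fun t => -deriv (gs (J t)) t) x < (fun t : ℝ => -(m - γ * t - ε)) x := by
      intro x hx _
      simp only [neg_lt_neg_iff]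
      have h1 := hlip (J x) x hx.1
      have h2 := hm (J x)
      linarith
    have main := image_le_of_liminf_slope_right_lt_deriv_boundary hcont hf' ha hB hbd
    have hfin := main (right_mem_Icc.2 hT)
    linarith
  -- let ε → 0
  have h1T : (0:ℝ) < 1 + T := by linarith
  refine le_of_forall_pos_le_add ?_
  intro ε hε
  have hk := key (ε / (1 + T)) (by positivity)
  have h2 : ε / (1 + T) * (1 + T) = ε := div_mul_cancel₀ _ (ne_of_gt h1T)
  linarith

/-- **The multivariate quadratic model lies underneath a continuous piecewise
function.** Let `f₁, …, fₙ : ℝ^d → ℝ` be differentiable, real-analytic along every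
line, with second derivatives along unit directions bounded in absolute value by `γ`,
and let `f : ℝ^d → ℝ` be continuous with `f(x) ∈ {f₁(x), …, fₙ(x)}` for all `x`.
Then for all `xₖ, x ∈ ℝ^d`:
`f(x) ≥ f(xₖ) + min_j ∇fⱼ(xₖ)ᵀ(x − xₖ) − (γ/2)‖x − xₖ‖²`. -/
theorem quadratic_model_le_piecewise_analytic_multivariate
    (d n : ℕ) (fs : Fin n → EuclideanSpace ℝ (Fin d) → ℝ)
    (hdiff : ∀ j : Fin n, Differentiable ℝ (fs j))
    (hline : ∀ j : Fin n, ∀ x p : EuclideanSpace ℝ (Fin d), ∀ t : ℝ,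
        AnalyticAt ℝ (fun α : ℝ => fs j (x + α • p)) t)
    (γ : ℝ) (hγ : 0 < γ)
    (hbound : ∀ j : Fin n, ∀ x p : EuclideanSpace ℝ (Fin d), ‖p‖ = 1 → ∀ α : ℝ,
        |deriv (deriv (fun β : ℝ => fs j (x + β • p))) α| ≤ γ)
    (f : EuclideanSpace ℝ (Fin d) → ℝ) (hf : Continuous f)
    (hpiece : ∀ x : EuclideanSpace ℝ (Fin d), ∃ j : Fin n, f x = fs j x) :
    ∀ xk x : EuclideanSpace ℝ (Fin d),
      f x ≥ f xk + (⨅ j : Fin n, fderiv ℝ (fs j) xk (x - xk)) - γ / 2 * ‖x - xk‖ ^ 2 := by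
  have hne : Nonempty (Fin n) := ⟨(hpiece 0).choose⟩
  intro xk x
  rcases eq_or_ne x xk with h | h
  · subst h
    have h0 : (⨅ j : Fin n, fderiv ℝ (fs j) x (x - x)) = 0 := by
      simp [sub_self]
    rw [h0]
    have : (0:ℝ) ≤ γ / 2 * ‖x - x‖ ^ 2 := by positivity
    simp only [add_zero, ge_iff_le]
    linarith
  · set r : ℝ := ‖x - xk‖ with hrdef
    have hr : 0 < r := norm_pos_iff.2 (sub_ne_zero.2 h)
    set p : EuclideanSpace ℝ (Fin d) := r⁻¹ • (x - xk) with hpdef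
    have hp : ‖p‖ = 1 := by
      rw [hpdef, norm_smul, Real.norm_eq_abs, abs_inv, abs_of_pos hr, ← hrdef,
        inv_mul_cancel₀ hr.ne']
    have hc : Continuous (fun α : ℝ => xk + α • p) :=
      continuous_const.add (continuous_id.smul continuous_const)
    have e0 : xk + (0:ℝ) • p = xk := by simp
    have e1 : xk + r • p = x := by
      rw [hpdef, smul_smul, mul_inv_cancel₀ hr.ne', one_smul, add_sub_cancel]
    -- derivative of the restriction along the line
    have ed : ∀ j, deriv (fun α : ℝ => fs j (xk + α • p)) 0
        = r⁻¹ * fderiv ℝ (fs j) xk (x - xk) := by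
      intro j
      have hc0 : HasDerivAt (fun α : ℝ => xk + α • p) p 0 := by
        simpa using ((hasDerivAt_id (0:ℝ)).smul_const p).const_add xk
      have hF : HasFDerivAt (fs j) (fderiv ℝ (fs j) xk) ((fun α : ℝ => xk + α • p) 0) := by
        simp only [e0, zero_smul, add_zero]
        exact ((hdiff j) xk).hasFDerivAt
      have hcomp := hF.comp_hasDerivAt 0 hc0
      have hcomp' : HasDerivAt (fun α : ℝ => fs j (xk + α • p)) (fderiv ℝ (fs j) xk p) 0 := hcomp
      rw [hcomp'.deriv, hpdef, map_smul, smul_eq_mul]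
    obtain ⟨j₀, hj₀⟩ := Finite.exists_min (fun j : Fin n => fderiv ℝ (fs j) xk (x - xk))
    have hinf1 : (⨅ j : Fin n, fderiv ℝ (fs j) xk (x - xk)) = fderiv ℝ (fs j₀) xk (x - xk) :=
      le_antisymm (ciInf_le (Set.Finite.bddBelow (finite_range _)) j₀) (le_ciInf hj₀)
    have hinf2 : (⨅ j : Fin n, deriv (fun α : ℝ => fs j (xk + α • p)) 0)
        = r⁻¹ * fderiv ℝ (fs j₀) xk (x - xk) := by
      refine le_antisymm ?_ (le_ciInf fun j => ?_)
      · calc (⨅ j : Fin n, deriv (fun α : ℝ => fs j (xk + α • p)) 0)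
            ≤ deriv (fun α : ℝ => fs j₀ (xk + α • p)) 0 :=
              ciInf_le (Set.Finite.bddBelow (finite_range _)) j₀
          _ = r⁻¹ * fderiv ℝ (fs j₀) xk (x - xk) := ed j₀
      · rw [ed j]
        exact mul_le_mul_of_nonneg_left (hj₀ j) (inv_nonneg.2 hr.le)
    have hmain := oneD_quadratic_model (g := fun α : ℝ => f (xk + α • p)) hne
      (fun j α => fs j (xk + α • p))
      (fun j t => hline j xk p t) hγ (fun j t => hbound j xk p hp t)
      (hf.comp hc) (fun t => hpiece _) hr.le
    rw [e0, e1, hinf2] at hmain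
    have hcancel : r⁻¹ * fderiv ℝ (fs j₀) xk (x - xk) * r = fderiv ℝ (fs j₀) xk (x - xk) := by
      field_simp
    rw [hcancel] at hmain
    rw [hinf1]
    linarith
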